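/- Let n > m, let C ⊆ F_{q^m}^n be an F_{q^m}-linear vector rank-metric code, let Γ be a basis of F_{q^m} over F_q, and let Γ(C) ⊆ Mat_{n×m}(F_q) be the associated rank-metric code. Then: (1) C and Γ(C) are both MRD if and only if C = 0 or C = F_{q^m}^n; (2) C is an optimal vector anticode and Γ(C) is an optimal anticode if and only if C = 0. -/

import Mathlib

open Matrix

/-- The rank weight of `v : Fqm^n`: the dimension over `Fq` of the `Fq`-span of its entries. -/
noncomputable def rkw (Fq : Type*) [Field Fq] {Fqm : Type*} [Field Fqm] [Algebra Fq Fqm]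
    {n : ℕ} (v : Fin n → Fqm) : ℕ :=
  Module.finrank Fq (Submodule.span Fq (Set.range v))

open scoped Classical in
/-- Minimum distance of a vector rank-metric code. -/
noncomputable def dminVec (Fq : Type*) [Field Fq] {Fqm : Type*} [Field Fqm] [Algebra Fq Fqm]
    {n : ℕ} (C : Submodule Fqm (Fin n → Fqm)) : ℕ :=
  if C = ⊥ then n + 1 else sInf {r : ℕ | ∃ v ∈ C, v ≠ 0 ∧ rkw Fq v = r}

open scoped Classical in
/-- Minimum distance of a matrix rank-metric code. -/
noncomputable def dminMat {Fq : Type*} [Field Fq] {n m : ℕ}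
    (C : Submodule Fq (Matrix (Fin n) (Fin m) Fq)) : ℕ :=
  if C = ⊥ then min m n + 1
  else sInf {r : ℕ | ∃ M ∈ C, M ≠ 0 ∧ M.rank = r}

/-- Maximum rank of a vector rank-metric code. -/
noncomputable def maxrkVec (Fq : Type*) [Field Fq] {Fqm : Type*} [Field Fqm] [Algebra Fq Fqm]
    {n : ℕ} (C : Submodule Fqm (Fin n → Fqm)) : ℕ :=
  sSup {r : ℕ | ∃ v ∈ C, rkw Fq v = r}

/-- Maximum rank of a matrix rank-metric code. -/
noncomputable def maxrkMat {Fq : Type*} [Field Fq] {n m : ℕ}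
    (C : Submodule Fq (Matrix (Fin n) (Fin m) Fq)) : ℕ :=
  sSup {r : ℕ | ∃ M ∈ C, M.rank = r}

/-- The `Fq`-linear map `v ↦ Γ(v)` from `Fqm^n` to `n × m` matrices over `Fq`,
where `Γ(v) i j` is the `j`-th coordinate of `v i` in the basis `Γ`. -/
noncomputable def gammaLin {Fq Fqm : Type*} [Field Fq] [Field Fqm] [Algebra Fq Fqm]
    {n m : ℕ} (Γ : Module.Basis (Fin m) Fq Fqm) :
    (Fin n → Fqm) →ₗ[Fq] Matrix (Fin n) (Fin m) Fq where
  toFun v := Matrix.of fun i j => Γ.repr (v i) j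
  map_add' v w := by ext i j; simp
  map_smul' c v := by ext i j; simp


section Aux
variable {Fq Fqm : Type*} [Field Fq] [Field Fqm] [Algebra Fq Fqm]
    {n m : ℕ} (Γ : Module.Basis (Fin m) Fq Fqm)

lemma gamma_inj : Function.Injective (gammaLin (n := n) Γ) := by
  intro v w h
  funext i
  apply Γ.repr.injective
  ext j
  exact congrFun (congrFun h i) j

lemma rank_gamma (v : Fin n → Fqm) : (gammaLin Γ v).rank = rkw Fq v := by
  rw [Matrix.rank_eq_finrank_span_row, rkw]
  have hr : Set.range (gammaLin (n := n) Γ v).row = Γ.equivFun.toLinearMap '' Set.range v := by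
    rw [← Set.range_comp]; rfl
  rw [hr, ← Submodule.map_span, LinearEquiv.finrank_map_eq]

include Γ in
lemma rkw_le (v : Fin n → Fqm) : rkw Fq v ≤ m := by
  haveI : FiniteDimensional Fq Fqm := Module.Finite.of_basis Γ
  have h := Submodule.finrank_le (Submodule.span Fq (Set.range v))
  rwa [Module.finrank_eq_card_basis Γ, Fintype.card_fin] at h

include Γ in
lemma rkw_pos {v : Fin n → Fqm} (hv : v ≠ 0) : 1 ≤ rkw Fq v := by
  haveI : FiniteDimensional Fq Fqm := Module.Finite.of_basis Γ
  rw [Nat.one_le_iff_ne_zero, rkw]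
  intro h0
  rw [Submodule.finrank_eq_zero, Submodule.span_eq_bot] at h0
  exact hv (funext fun i => h0 (v i) ⟨i, rfl⟩)

lemma rkw_zero : rkw Fq (0 : Fin n → Fqm) = 0 := by
  rw [rkw]
  have h : Submodule.span Fq (Set.range (0 : Fin n → Fqm)) = ⊥ := by
    rw [Submodule.span_eq_bot]; rintro x ⟨i, rfl⟩; rfl
  rw [h, finrank_bot]

lemma rkw_single (i : Fin n) : rkw Fq (Pi.single i (1 : Fqm)) = 1 := by
  rw [rkw]
  have h : Submodule.span Fq (Set.range (Pi.single i (1 : Fqm)))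
      = Submodule.span Fq {(1 : Fqm)} := by
    apply le_antisymm
    · rw [Submodule.span_le]
      rintro x ⟨j, rfl⟩
      by_cases hj : j = i
      · subst hj; rw [Pi.single_eq_same]; exact Submodule.mem_span_singleton_self 1
      · rw [Pi.single_eq_of_ne hj]; exact Submodule.zero_mem _
    · rw [Submodule.span_le, Set.singleton_subset_iff]
      exact Submodule.subset_span ⟨i, Pi.single_eq_same i 1⟩
  rw [h]
  exact finrank_span_singleton one_ne_zero

variable (C : Submodule Fqm (Fin n → Fqm))

lemma mem_map_gamma {M : Matrix (Fin n) (Fin m) Fq} :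
    M ∈ Submodule.map (gammaLin (n := n) Γ) (C.restrictScalars Fq) ↔
      ∃ v ∈ C, gammaLin Γ v = M := by
  simp [Submodule.mem_map, Submodule.restrictScalars_mem]

lemma setEq1 :
    {r : ℕ | ∃ M ∈ Submodule.map (gammaLin (n := n) Γ) (C.restrictScalars Fq),
        M ≠ 0 ∧ M.rank = r} = {r : ℕ | ∃ v ∈ C, v ≠ 0 ∧ rkw Fq v = r} := by
  ext r
  constructor
  · rintro ⟨M, hM, hM0, hMr⟩
    obtain ⟨v, hv, rfl⟩ := (mem_map_gamma Γ C).mp hM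
    exact ⟨v, hv, fun h => hM0 (by rw [h, map_zero]), by rw [← rank_gamma Γ v]; exact hMr⟩
  · rintro ⟨v, hv, hv0, rfl⟩
    exact ⟨gammaLin Γ v, (mem_map_gamma Γ C).mpr ⟨v, hv, rfl⟩,
      fun h => hv0 (gamma_inj Γ (by rw [h, map_zero])), rank_gamma Γ v⟩

lemma setEq2 :
    {r : ℕ | ∃ M ∈ Submodule.map (gammaLin (n := n) Γ) (C.restrictScalars Fq), M.rank = r}
      = {r : ℕ | ∃ v ∈ C, rkw Fq v = r} := by
  ext r
  constructor
  · rintro ⟨M, hM, hMr⟩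
    obtain ⟨v, hv, rfl⟩ := (mem_map_gamma Γ C).mp hM
    exact ⟨v, hv, by rw [← rank_gamma Γ v]; exact hMr⟩
  · rintro ⟨v, hv, rfl⟩
    exact ⟨gammaLin Γ v, (mem_map_gamma Γ C).mpr ⟨v, hv, rfl⟩, rank_gamma Γ v⟩

lemma map_gamma_bot_iff :
    Submodule.map (gammaLin (n := n) Γ) (C.restrictScalars Fq) = ⊥ ↔ C = ⊥ := by
  constructor
  · intro h
    rw [Submodule.eq_bot_iff] at h ⊢
    intro v hv
    have hm : gammaLin Γ v ∈ Submodule.map (gammaLin (n := n) Γ) (C.restrictScalars Fq) :=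
      ⟨v, hv, rfl⟩
    exact gamma_inj Γ (by rw [h _ hm, map_zero])
  · rintro rfl
    rw [Submodule.restrictScalars_bot, Submodule.map_bot]

lemma finrank_map_gamma :
    Module.finrank Fq (Submodule.map (gammaLin (n := n) Γ) (C.restrictScalars Fq))
      = m * Module.finrank Fqm C := by
  haveI : FiniteDimensional Fq Fqm := Module.Finite.of_basis Γ
  rw [← LinearEquiv.finrank_eq
    (Submodule.equivMapOfInjective _ (gamma_inj Γ) (C.restrictScalars Fq))]
  rw [LinearEquiv.finrank_eq ((Submodule.restrictScalarsEquiv Fq (R := Fqm) (M := Fin n → Fqm) C).restrictScalars Fq)]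
  rw [← Module.finrank_mul_finrank Fq Fqm C, Module.finrank_eq_card_basis Γ, Fintype.card_fin]

end Aux

section Aux2
variable {Fq Fqm : Type*} [Field Fq] [Field Fqm] [Algebra Fq Fqm]
    {n m : ℕ} (Γ : Module.Basis (Fin m) Fq Fqm)

include Γ in
lemma dminVec_top (hn : 0 < n) :
    dminVec Fq (⊤ : Submodule Fqm (Fin n → Fqm)) = 1 := by
  classical
  haveI : Nonempty (Fin n) := ⟨⟨0, hn⟩⟩
  have hnt : (⊤ : Submodule Fqm (Fin n → Fqm)) ≠ ⊥ := by simp [Submodule.eq_bot_iff]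
  rw [dminVec, if_neg hnt]
  have h1 : (1 : ℕ) ∈ {r : ℕ | ∃ v ∈ (⊤ : Submodule Fqm (Fin n → Fqm)), v ≠ 0 ∧ rkw Fq v = r} :=
    ⟨Pi.single ⟨0, hn⟩ 1, Submodule.mem_top,
      fun h => (one_ne_zero : (1 : Fqm) ≠ 0) (by simpa using congrFun h ⟨0, hn⟩), rkw_single _⟩
  refine le_antisymm (Nat.sInf_le h1) ?_
  obtain ⟨v, -, hv0, hr⟩ := Nat.sInf_mem (⟨1, h1⟩ : Set.Nonempty _)
  rw [← hr]
  exact rkw_pos Γ hv0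

end Aux2

section Aux3
variable {Fq Fqm : Type*} [Field Fq] [Field Fqm] [Algebra Fq Fqm]
    {n m : ℕ} (Γ : Module.Basis (Fin m) Fq Fqm) (C : Submodule Fqm (Fin n → Fqm))

lemma dminMat_map_eq (hC : C ≠ ⊥) :
    dminMat (Submodule.map (gammaLin (n := n) Γ) (C.restrictScalars Fq)) = dminVec Fq C := by
  classical
  rw [dminMat, dminVec, if_neg hC, if_neg (fun h => hC ((map_gamma_bot_iff Γ C).mp h)), setEq1]

end Aux3

/-- For `n > m`: (1) `C` and `Γ(C)` are both MRD iff `C = 0` or `C = Fqm^n`;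
(2) `C` is an optimal vector anticode and `Γ(C)` is an optimal anticode iff `C = 0`. -/
theorem stmt10 {Fq Fqm : Type*} [Field Fq] [Fintype Fq] [Field Fqm] [Algebra Fq Fqm]
    {n m : ℕ} (hnm : m < n) (Γ : Module.Basis (Fin m) Fq Fqm)
    (C : Submodule Fqm (Fin n → Fqm)) :
    ((((Module.finrank Fqm C : ℤ) = (n : ℤ) - (dminVec Fq C : ℤ) + 1) ∧
      ((Module.finrank Fq (Submodule.map (gammaLin Γ) (C.restrictScalars Fq)) : ℤ) =
        (max n m : ℤ) * ((min m n : ℤ) -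
          (dminMat (Submodule.map (gammaLin Γ) (C.restrictScalars Fq)) : ℤ) + 1))) ↔
      (C = ⊥ ∨ C = ⊤)) ∧
    (((Module.finrank Fqm C = maxrkVec Fq C) ∧
      (Module.finrank Fq (Submodule.map (gammaLin Γ) (C.restrictScalars Fq)) =
        max n m * maxrkMat (Submodule.map (gammaLin Γ) (C.restrictScalars Fq)))) ↔
      C = ⊥) := by
  classical
  haveI : FiniteDimensional Fq Fqm := Module.Finite.of_basis Γ
  have hn : 0 < n := lt_of_le_of_lt (Nat.zero_le m) hnm
  haveI : Nonempty (Fin n) := ⟨⟨0, hn⟩⟩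
  have hmax : max n m = n := max_eq_left hnm.le
  have hmin : min m n = m := min_eq_left hnm.le
  have hmaxZ : max (n : ℤ) (m : ℤ) = (n : ℤ) := max_eq_left (by exact_mod_cast hnm.le)
  have hminZ : min (m : ℤ) (n : ℤ) = (m : ℤ) := min_eq_left (by exact_mod_cast hnm.le)
  have hfr : Module.finrank Fq (Submodule.map (gammaLin Γ) (C.restrictScalars Fq))
      = m * Module.finrank Fqm C := finrank_map_gamma Γ C
  constructor
  · constructor
    · rintro ⟨h1, h2⟩
      by_cases hC : C = ⊥
      · exact Or.inl hC
      · right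
        obtain ⟨v0, hv0C, hv00⟩ := Submodule.exists_mem_ne_zero_of_ne_bot hC
        set S := {r : ℕ | ∃ v ∈ C, v ≠ 0 ∧ rkw Fq v = r} with hS
        obtain ⟨w, hwC, hw0, hwr⟩ :=
          Nat.sInf_mem (⟨rkw Fq v0, v0, hv0C, hv00, rfl⟩ : S.Nonempty)
        have hd1 : 1 ≤ sInf S := hwr ▸ rkw_pos Γ hw0
        have hdv : dminVec Fq C = sInf S := by rw [dminVec, if_neg hC]
        rw [hdv] at h1
        rw [dminMat_map_eq Γ C hC, hdv, hfr, hmaxZ, hminZ] at h2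
        push_cast at h1 h2
        have e : ((n : ℤ) - m) * (((sInf S : ℕ) : ℤ) - 1) = 0 := by
          linear_combination h2 - (m : ℤ) * h1
        have hd : sInf S = 1 := by
          rcases mul_eq_zero.mp e with h | h
          · exfalso; omega
          · omega
        rw [hd] at h1
        have hk : Module.finrank Fqm C = n := by push_cast at h1; omega
        apply Submodule.eq_top_of_finrank_eq
        rw [hk, Module.finrank_fin_fun]
    · rintro (rfl | rfl)
      · have hD : Submodule.map (gammaLin Γ) ((⊥ : Submodule Fqm (Fin n → Fqm)).restrictScalars Fq)
            = ⊥ := (map_gamma_bot_iff Γ ⊥).mpr rfl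
        rw [hD]
        constructor
        · rw [finrank_bot, dminVec, if_pos rfl]; push_cast; ring
        · rw [finrank_bot, dminMat, if_pos rfl]; push_cast; ring
      · have hnt : (⊤ : Submodule Fqm (Fin n → Fqm)) ≠ ⊥ := by simp [Submodule.eq_bot_iff]
        constructor
        · rw [finrank_top, Module.finrank_fin_fun, dminVec_top Γ hn]; push_cast; ring
        · rw [hfr, dminMat_map_eq Γ ⊤ hnt, dminVec_top Γ hn, finrank_top,
            Module.finrank_fin_fun, hmaxZ, hminZ]
          push_cast; ring
  · constructor
    · rintro ⟨h1, h2⟩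
      have hmm : maxrkMat (Submodule.map (gammaLin Γ) (C.restrictScalars Fq))
          = maxrkVec Fq C := by rw [maxrkMat, maxrkVec, setEq2]
      rw [hfr, hmax, hmm, ← h1] at h2
      by_contra hC
      have hk : Module.finrank Fqm C ≠ 0 := fun h => hC (Submodule.finrank_eq_zero.mp h)
      exact absurd (Nat.eq_of_mul_eq_mul_right (Nat.pos_of_ne_zero hk) h2) (Nat.ne_of_lt hnm)
    · rintro rfl
      have hD : Submodule.map (gammaLin Γ) ((⊥ : Submodule Fqm (Fin n → Fqm)).restrictScalars Fq)
          = ⊥ := (map_gamma_bot_iff Γ ⊥).mpr rfl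
      constructor
      · rw [finrank_bot, maxrkVec]
        have hs : {r : ℕ | ∃ v ∈ (⊥ : Submodule Fqm (Fin n → Fqm)), rkw Fq v = r} = {0} := by
          ext r
          constructor
          · rintro ⟨v, hv, rfl⟩
            rw [(Submodule.mem_bot _).mp hv, rkw_zero]
            rfl
          · rintro rfl
            exact ⟨0, Submodule.zero_mem _, rkw_zero⟩
        rw [hs, csSup_singleton]
      · rw [hD, finrank_bot, maxrkMat]
        have hs : {r : ℕ | ∃ M ∈ (⊥ : Submodule Fq (Matrix (Fin n) (Fin m) Fq)), M.rank = r}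
            = {0} := by
          ext r
          constructor
          · rintro ⟨M, hM, rfl⟩
            rw [(Submodule.mem_bot _).mp hM, Matrix.rank_zero]
            rfl
          · rintro rfl
            exact ⟨0, Submodule.zero_mem _, Matrix.rank_zero⟩
        rw [hs, csSup_singleton, mul_zero]
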